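/- Let (r_p) be a decreasing sequence of positive reals with divergent sum, let q ∈ ℤ⁺, and let f₀,…,f_{q−1} ∈ ℂ. Then lim_{k→∞} (∑_{p=0}^{k} r_p)^{-1} · ∑_{j=0}^{q−1} f_j · ∑_{0≤p≤k, p≡j (mod q)} r_p = (1/q) ∑_{j=0}^{q−1} f_j. -/

import Mathlib

open Filter Finset Topology

private lemma sum_le_sum_map (A B : Finset ℕ) (i : ℕ → ℕ) (r : ℕ → ℝ)
    (hr0 : ∀ p ∈ B, 0 ≤ r p) (hmaps : ∀ p ∈ A, i p ∈ B)
    (hinj : ∀ p ∈ A, ∀ p' ∈ A, i p = i p' → p = p')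
    (hle : ∀ p ∈ A, r p ≤ r (i p)) :
    ∑ p ∈ A, r p ≤ ∑ p ∈ B, r p := by
  calc ∑ p ∈ A, r p ≤ ∑ p ∈ A, r (i p) := Finset.sum_le_sum hle
    _ = ∑ p ∈ A.image i, r p := (Finset.sum_image hinj).symm
    _ ≤ ∑ p ∈ B, r p := Finset.sum_le_sum_of_subset_of_nonneg
        (Finset.image_subset_iff.mpr hmaps) (fun p hp _ => hr0 p hp)

theorem stmt_8
    (r : ℕ → ℝ)
    (hr_pos : ∀ p, 0 < r p)
    (hr_dec : ∀ p, r (p + 1) ≤ r p)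
    (hr_div : Tendsto (fun k => ∑ p ∈ range (k + 1), r p) atTop atTop)
    (q : ℕ) (hq : 0 < q) (f : ℕ → ℂ) :
    Tendsto
      (fun k => ((∑ p ∈ range (k + 1), r p : ℝ) : ℂ)⁻¹
        * ∑ j ∈ range q, f j * ((∑ p ∈ range (k + 1), if p % q = j then r p else 0 : ℝ) : ℂ))
      atTop (nhds ((1 / (q : ℂ)) * ∑ j ∈ range q, f j)) := by
  have hanti : Antitone r := antitone_nat_of_succ_le hr_dec
  set S : ℕ → ℝ := fun k => ∑ p ∈ range (k + 1), r p with hSdef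
  set g : ℕ → ℕ → ℝ := fun j k => ∑ p ∈ range (k + 1), if p % q = j then r p else 0 with hgdef
  have hSpos : ∀ k, 0 < S k := fun k =>
    Finset.sum_pos (fun p _ => hr_pos p) ⟨0, mem_range.mpr (Nat.succ_pos k)⟩
  have hgf : ∀ j k, g j k = ∑ p ∈ (range (k + 1)).filter (fun p => p % q = j), r p :=
    fun j k => (Finset.sum_filter _ _).symm
  -- (A): g j k ≤ g 0 k
  have hA : ∀ j, j < q → ∀ k, g j k ≤ g 0 k := by
    intro j hj k
    rw [hgf, hgf]
    apply sum_le_sum_map _ _ (fun p => p - j) r (fun p _ => (hr_pos p).le)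
    · intro p hp
      simp only [mem_filter, mem_range] at hp ⊢
      have hjp : j ≤ p := hp.2 ▸ Nat.mod_le p q
      constructor
      · omega
      · have : p - j = q * (p / q) := by
          have := Nat.div_add_mod p q
          omega
        simp [this, Nat.mul_mod_right]
    · intro p hp p' hp' h
      simp only [mem_filter, mem_range] at hp hp'
      have hjp : j ≤ p := hp.2 ▸ Nat.mod_le p q
      have hjp' : j ≤ p' := hp'.2 ▸ Nat.mod_le p' q
      omega
    · intro p _
      exact hanti (Nat.sub_le p j)
  -- (B): g 0 k ≤ g j k + r 0
  have hB : ∀ j, j < q → ∀ k, g 0 k ≤ g j k + r 0 := by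
    intro j hj k
    rw [hgf, hgf]
    set A0 : Finset ℕ := (range (k + 1)).filter (fun p => p % q = 0) with hA0
    have h0mem : 0 ∈ A0 := by simp [hA0]
    rw [← Finset.sum_erase_add A0 r h0mem]
    apply add_le_add_left
    apply sum_le_sum_map _ _ (fun p => p - q + j) r (fun p _ => (hr_pos p).le)
    · intro p hp
      simp only [hA0, mem_erase, mem_filter, mem_range] at hp ⊢
      obtain ⟨hne, hpk, hmod⟩ := hp
      obtain ⟨m, rfl⟩ := Nat.dvd_of_mod_eq_zero hmod
      have hm : 1 ≤ m := by
        rcases Nat.eq_zero_or_pos m with h | h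
        · simp [h] at hne
        · exact h
      have hq1 : q * 1 ≤ q * m := Nat.mul_le_mul_left q hm
      constructor
      · omega
      · have h : q * m - q + j = q * (m - 1) + j := by
          cases m with
          | zero => omega
          | succ n => simp [Nat.mul_succ]
        rw [h, Nat.mul_add_mod, Nat.mod_eq_of_lt hj]
    · intro p hp p' hp' h
      simp only [hA0, mem_erase, mem_filter, mem_range] at hp hp'
      obtain ⟨hne, hpk, hmod⟩ := hp
      obtain ⟨hne', hpk', hmod'⟩ := hp'
      have : q ≤ p := by
        obtain ⟨m, rfl⟩ := Nat.dvd_of_mod_eq_zero hmod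
        rcases Nat.eq_zero_or_pos m with hz | hz
        · simp [hz] at hne
        · nlinarith
      have : q ≤ p' := by
        obtain ⟨m, rfl⟩ := Nat.dvd_of_mod_eq_zero hmod'
        rcases Nat.eq_zero_or_pos m with hz | hz
        · simp [hz] at hne'
        · nlinarith
      omega
    · intro p hp
      simp only [hA0, mem_erase, mem_filter, mem_range] at hp
      obtain ⟨hne, hpk, hmod⟩ := hp
      obtain ⟨m, rfl⟩ := Nat.dvd_of_mod_eq_zero hmod
      have hm : 1 ≤ m := by
        rcases Nat.eq_zero_or_pos m with h | h
        · simp [h] at hne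
        · exact h
      apply hanti
      have : q * 1 ≤ q * m := Nat.mul_le_mul_left q hm
      omega
  -- ratio limit
  have hqR : (0:ℝ) < (q:ℝ) := by exact_mod_cast hq
  have hsum : ∀ k, ∑ j ∈ range q, g j k = S k := by
    intro k
    simp only [hgdef]
    rw [Finset.sum_comm]
    apply Finset.sum_congr rfl
    intro p _
    rw [Finset.sum_ite_eq (range q) (p % q) (fun _ => r p)]
    simp [Nat.mod_lt p hq]
  have hratio : ∀ j, j < q → Tendsto (fun k => g j k / S k) atTop (𝓝 (1 / (q:ℝ))) := by
    intro j hj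
    have key1 : ∀ k, S k ≤ q * g j k + q * r 0 := by
      intro k
      rw [← hsum k]
      calc ∑ j' ∈ range q, g j' k ≤ ∑ _j' ∈ range q, (g j k + r 0) := by
            apply Finset.sum_le_sum
            intro j' hj'
            calc g j' k ≤ g 0 k := hA j' (mem_range.mp hj') k
              _ ≤ g j k + r 0 := hB j hj k
        _ = q * g j k + q * r 0 := by
            rw [Finset.sum_const, Finset.card_range]
            push_cast
            ring
    have key2 : ∀ k, q * g j k ≤ S k + q * r 0 := by
      intro k
      rw [← hsum k]
      have : ∀ j' ∈ range q, g j k - r 0 ≤ g j' k := by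
        intro j' hj'
        have h1 : g j k ≤ g 0 k := hA j hj k
        have h2 : g 0 k ≤ g j' k + r 0 := hB j' (mem_range.mp hj') k
        linarith
      have := Finset.sum_le_sum this
      rw [Finset.sum_const, Finset.card_range, nsmul_eq_mul] at this
      push_cast at this ⊢
      nlinarith
    have h0 : Tendsto (fun k => r 0 / S k) atTop (𝓝 0) :=
      tendsto_const_nhds.div_atTop hr_div
    have hlo : ∀ k, 1 / (q:ℝ) - r 0 / S k ≤ g j k / S k := by
      intro k
      have hS := hSpos k
      rw [div_sub_div _ _ (ne_of_gt hqR) (ne_of_gt hS), div_le_div_iff₀ (by positivity) hS]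
      have := key1 k
      nlinarith
    have hhi : ∀ k, g j k / S k ≤ 1 / (q:ℝ) + r 0 / S k := by
      intro k
      have hS := hSpos k
      rw [div_add_div _ _ (ne_of_gt hqR) (ne_of_gt hS), div_le_div_iff₀ hS (by positivity)]
      have := key2 k
      nlinarith
    have hl : Tendsto (fun k => 1 / (q:ℝ) - r 0 / S k) atTop (nhds (1 / (q:ℝ))) := by
      simpa using tendsto_const_nhds.sub h0
    have hu : Tendsto (fun k => 1 / (q:ℝ) + r 0 / S k) atTop (nhds (1 / (q:ℝ))) := by
      simpa using tendsto_const_nhds.add h0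
    exact tendsto_of_tendsto_of_tendsto_of_le_of_le hl hu hlo hhi
  -- conclude in ℂ
  have heq : ∀ k, ((S k : ℝ) : ℂ)⁻¹ * ∑ j ∈ range q, f j * ((g j k : ℝ) : ℂ)
      = ∑ j ∈ range q, f j * (((g j k / S k : ℝ)) : ℂ) := by
    intro k
    rw [Finset.mul_sum]
    apply Finset.sum_congr rfl
    intro j _
    push_cast
    ring
  have hlim : Tendsto (fun k => ∑ j ∈ range q, f j * (((g j k / S k : ℝ)) : ℂ)) atTop
      (𝓝 (∑ j ∈ range q, f j * (((1 / (q:ℝ) : ℝ)) : ℂ))) := by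
    apply tendsto_finset_sum
    intro j hj
    exact tendsto_const_nhds.mul
      ((Complex.continuous_ofReal.tendsto _).comp (hratio j (mem_range.mp hj)))
  have hfin : (∑ j ∈ range q, f j * (((1 / (q:ℝ) : ℝ)) : ℂ))
      = (1 / (q : ℂ)) * ∑ j ∈ range q, f j := by
    rw [Finset.mul_sum]
    apply Finset.sum_congr rfl
    intro j _
    push_cast
    ring
  rw [← hfin]
  exact hlim.congr (fun k => (heq k).symm)
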